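/- Let M be a finite MDP with alarm region and x_0 ∉ X_a an initial state. For every history-dependent policy π̂ of the binary augmented MDP M̂ with initial state (x_0,0), there exists a history-dependent policy π of M with initial state x_0 such that J_M(π) = Ĵ(π̂) and P^π(∃ t ∈ {0,…,T}: X_t ∈ X_a) = P^π̂(Y_T = 1). In particular, if π̂ satisfies P^π̂(Y_T = 1) ≤ Δ for some Δ ∈ [0,1], then π satisfies P^π(∃ t: X_t ∈ X_a) ≤ Δ and attains the same objective value. -/

import Mathlib

/- Common framework: finite MDPs with alarm region, trajectories,
   history-dependent policies, trajectory laws, objectives. -/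

attribute [local instance] Classical.propDecidable

noncomputable section

/-- A finite MDP with alarm region `Xa`, horizon `T ≥ 1`, transition pmf `P`,
running rewards `r` and terminal reward `rT`. -/
structure MDP (X A : Type) [Fintype X] [Fintype A] where
  T : ℕ
  hT : 1 ≤ T
  P : X → A → X → ℝ
  P_nonneg : ∀ x a x', 0 ≤ P x a x'
  P_sum : ∀ x a, ∑ x', P x a x' = 1
  r : Fin T → X → A → ℝ
  rT : X → ℝ
  Xa : Set X

variable {X A : Type} [Fintype X] [Fintype A]

/-- A trajectory `(x₀,…,x_T, a₀,…,a_{T-1})`. -/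
abbrev Traj (M : MDP X A) := (Fin (M.T + 1) → X) × (Fin M.T → A)

/-- A history-dependent randomized policy: at each time `t < T` it maps the
history `(x₀,…,x_t, a₀,…,a_{t-1})` to a pmf on actions. -/
structure HistPolicy (M : MDP X A) where
  π : (t : Fin M.T) → (Fin (t.val + 1) → X) → (Fin t.val → A) → A → ℝ
  nonneg : ∀ t xs as a, 0 ≤ π t xs as a
  sum_one : ∀ t xs as, ∑ a, π t xs as a = 1

/-- A policy is Markov if at each time it depends only on the current state. -/
def IsMarkov {M : MDP X A} (p : HistPolicy M) : Prop :=
  ∀ (t : Fin M.T) (xs xs' : Fin (t.val + 1) → X) (as as' : Fin t.val → A),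
    xs (Fin.last t.val) = xs' (Fin.last t.val) → p.π t xs as = p.π t xs' as'

/-- The state part of the history at time `t` determined by a trajectory. -/
def histStates {M : MDP X A} (τ : Traj M) (t : Fin M.T) : Fin (t.val + 1) → X :=
  fun i => τ.1 (Fin.castLE (by have := t.isLt; omega) i)

/-- The action part of the history at time `t` determined by a trajectory. -/
def histActs {M : MDP X A} (τ : Traj M) (t : Fin M.T) : Fin t.val → A :=
  fun i => τ.2 (Fin.castLE (by have := t.isLt; omega) i)

/-- The probability mass of a trajectory under policy `p` with initial state `x0`. -/
def trajProb (M : MDP X A) (p : HistPolicy M) (x0 : X) (τ : Traj M) : ℝ :=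
  (if τ.1 0 = x0 then (1 : ℝ) else 0) *
    ∏ t : Fin M.T,
      p.π t (histStates τ t) (histActs τ t) (τ.2 t) *
        M.P (τ.1 t.castSucc) (τ.2 t) (τ.1 t.succ)

/-- Probability of an event (a set of trajectories) under the trajectory law. -/
def probEvent (M : MDP X A) (p : HistPolicy M) (x0 : X) (E : Traj M → Prop) : ℝ :=
  ∑ τ : Traj M, if E τ then trajProb M p x0 τ else 0

/-- The objective `J_M(π) = E[Σ_t r_t(X_t,A_t) + r_T(X_T)]`. -/
def J (M : MDP X A) (p : HistPolicy M) (x0 : X) : ℝ :=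
  ∑ τ : Traj M, trajProb M p x0 τ *
    (∑ t : Fin M.T, M.r t (τ.1 t.castSucc) (τ.2 t) + M.rT (τ.1 (Fin.last M.T)))

/-- The binary augmented MDP: the extra `Bool` state records whether an alarm
has been triggered so far. -/
def binAug (M : MDP X A) : MDP (X × Bool) A where
  T := M.T
  hT := M.hT
  P := fun s a s' =>
    if s'.2 = (s.2 || decide (s'.1 ∈ M.Xa)) then M.P s.1 a s'.1 else 0
  P_nonneg := by
    intro s a s'
    try dsimp only
    split
    · exact M.P_nonneg s.1 a s'.1
    · exact le_refl 0
  P_sum := by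
    intro s a
    rw [Fintype.sum_prod_type]
    have h : ∀ x' : X,
        (∑ y : Bool, if y = (s.2 || decide (x' ∈ M.Xa)) then M.P s.1 a x' else 0)
          = M.P s.1 a x' := by
      intro x'; simp
    rw [Finset.sum_congr rfl fun x' _ => h x']
    exact M.P_sum s.1 a
  r := fun t s a => M.r t s.1 a
  rT := fun s => M.rT s.1
  Xa := {s | s.1 ∈ M.Xa}

/-! ### Auxiliary machinery for the proof -/

/-- The alarm flag determined by a state history: `true` iff some state at a
time `≥ 1` up to `i` lies in the alarm region. -/
def flagF (M : MDP X A) {n : ℕ} (xs : Fin (n + 1) → X) (i : Fin (n + 1)) : Bool :=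
  decide (∃ j : Fin (n + 1), j ≤ i ∧ j ≠ 0 ∧ xs j ∈ M.Xa)

lemma flagF_zero (M : MDP X A) {n : ℕ} (xs : Fin (n + 1) → X) : flagF M xs 0 = false := by
  simp only [flagF, decide_eq_false_iff_not]
  rintro ⟨j, hj, hj0, -⟩
  exact hj0 (Fin.le_zero_iff.mp hj)

lemma flagF_succ (M : MDP X A) {n : ℕ} (xs : Fin (n + 1) → X) (i : Fin n) :
    flagF M xs i.succ = (flagF M xs i.castSucc || decide (xs i.succ ∈ M.Xa)) := by
  rw [Bool.eq_iff_iff]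
  simp only [flagF, Bool.or_eq_true, decide_eq_true_eq]
  constructor
  · rintro ⟨j, hj, hj0, hm⟩
    rcases eq_or_ne j i.succ with rfl | hne
    · exact Or.inr hm
    · refine Or.inl ⟨j, ?_, hj0, hm⟩
      have h1 : j.val ≤ i.val + 1 := by simpa [Fin.le_def] using hj
      have h2 : j.val ≠ i.val + 1 := fun h => hne (Fin.ext (by simpa using h))
      simp only [Fin.le_def, Fin.coe_castSucc]
      omega
  · rintro (⟨j, hj, hj0, hm⟩ | hm)
    · refine ⟨j, ?_, hj0, hm⟩
      have h1 : j.val ≤ i.val := by simpa [Fin.le_def] using hj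
      simp only [Fin.le_def, Fin.val_succ]
      omega
    · refine ⟨i.succ, le_refl _, ?_, hm⟩
      simp only [ne_eq, Fin.ext_iff, Fin.val_succ, Fin.val_zero]
      omega

lemma flagF_castLE (M : MDP X A) {m n : ℕ} (h : m + 1 ≤ n + 1) (xs : Fin (n + 1) → X)
    (i : Fin (m + 1)) :
    flagF M (fun k => xs (Fin.castLE h k)) i = flagF M xs (Fin.castLE h i) := by
  rw [flagF, flagF, decide_eq_decide]
  constructor
  · rintro ⟨j, hj, hj0, hm⟩
    refine ⟨Fin.castLE h j, ?_, ?_, hm⟩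
    · rw [Fin.le_def]
      exact Fin.le_def.mp hj
    · simp only [ne_eq, Fin.ext_iff, Fin.coe_castLE, Fin.val_zero] at hj0 ⊢
      exact hj0
  · rintro ⟨j, hj, hj0, hm⟩
    have hjv : j.val ≤ i.val := by simpa [Fin.le_def] using hj
    have hlt : j.val < m + 1 := lt_of_le_of_lt hjv i.isLt
    refine ⟨⟨j.val, hlt⟩, ?_, ?_, ?_⟩
    · simpa [Fin.le_def] using hjv
    · simp only [ne_eq, Fin.ext_iff, Fin.val_zero] at hj0 ⊢
      exact hj0
    · have hc : Fin.castLE h ⟨j.val, hlt⟩ = j := Fin.ext rfl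
      rw [hc]; exact hm

/-- Lift a state history by recording the alarm flag. -/
def liftH (M : MDP X A) {n : ℕ} (xs : Fin (n + 1) → X) : Fin (n + 1) → X × Bool :=
  fun i => (xs i, flagF M xs i)

/-- The policy on `M` imitating a policy of the augmented MDP. -/
def liftPolicy (M : MDP X A) (q : HistPolicy (binAug M)) : HistPolicy M where
  π := fun t xs as a => q.π t (liftH M xs) as a
  nonneg := fun t xs as a => q.nonneg t _ as a
  sum_one := fun t xs as => q.sum_one t _ as

/-- Lift a trajectory of `M` to the augmented MDP. -/
def liftTraj (M : MDP X A) (τ : Traj M) : Traj (binAug M) :=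
  (liftH M τ.1, τ.2)

/-- Project a trajectory of the augmented MDP back to `M`. -/
def projTraj (M : MDP X A) (σ : Traj (binAug M)) : Traj M :=
  (fun i => (σ.1 i).1, σ.2)

lemma binAugP_def (M : MDP X A) :
    (binAug M).P = fun s a s' =>
      if s'.2 = (s.2 || decide (s'.1 ∈ M.Xa)) then M.P s.1 a s'.1 else 0 := rfl

lemma trajProb_ne_zero_start (M : MDP X A) (p : HistPolicy M) (x0 : X) (τ : Traj M)
    (h : trajProb M p x0 τ ≠ 0) : τ.1 0 = x0 := by
  by_contra hc
  exact h (by unfold trajProb; rw [if_neg hc, zero_mul])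

lemma trajProb_lift (M : MDP X A) (x0 : X) (q : HistPolicy (binAug M)) (τ : Traj M) :
    trajProb (binAug M) q (x0, false) (liftTraj M τ) = trajProb M (liftPolicy M q) x0 τ := by
  unfold trajProb
  congr 1
  · have hiff : (liftTraj M τ).1 0 = (x0, false) ↔ τ.1 0 = x0 := by
      constructor
      · intro h
        exact congrArg (fun p => p.1) h
      · intro h
        show (τ.1 0, flagF M τ.1 0) = (x0, false)
        rw [h, flagF_zero]
    simp only [hiff]
  · apply Finset.prod_congr rfl
    intro t _
    have hs : histStates (liftTraj M τ) t = liftH M (histStates τ t) := by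
      funext i
      show liftH M τ.1 _ = _
      simp only [liftH, histStates, liftTraj]
      exact Prod.ext rfl (flagF_castLE M _ τ.1 i).symm
    have ha : histActs (liftTraj M τ) t = histActs τ t := rfl
    have hP : (binAug M).P ((liftTraj M τ).1 t.castSucc) ((liftTraj M τ).2 t)
        ((liftTraj M τ).1 t.succ) = M.P (τ.1 t.castSucc) (τ.2 t) (τ.1 t.succ) := by
      rw [binAugP_def]
      exact if_pos (flagF_succ M τ.1 t)
    rw [hs, ha, hP]
    rfl

lemma trajProb_binAug_eq_zero (M : MDP X A) (x0 : X) (q : HistPolicy (binAug M))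
    (σ : Traj (binAug M)) (h : σ ≠ liftTraj M (projTraj M σ)) :
    trajProb (binAug M) q (x0, false) σ = 0 := by
  by_contra hne
  apply h
  have h0 : σ.1 0 = (x0, false) := by
    by_contra hc
    exact hne (by unfold trajProb; rw [if_neg hc, zero_mul])
  have htr : ∀ t : Fin M.T,
      (σ.1 t.succ).2 = ((σ.1 t.castSucc).2 || decide ((σ.1 t.succ).1 ∈ M.Xa)) := by
    intro t
    by_contra hc
    apply hne
    have hP : (binAug M).P (σ.1 t.castSucc) (σ.2 t) (σ.1 t.succ) = 0 := by
      rw [binAugP_def]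
      exact if_neg hc
    unfold trajProb
    exact mul_eq_zero_of_right _
      (Finset.prod_eq_zero (Finset.mem_univ t) (mul_eq_zero_of_right _ hP))
  have hflag : ∀ i : Fin (M.T + 1), (σ.1 i).2 = flagF M (fun k => (σ.1 k).1) i := by
    intro i
    induction i using Fin.induction with
    | zero => exact (congrArg Prod.snd h0).trans (flagF_zero M (fun k => (σ.1 k).1)).symm
    | succ t ih => rw [htr t, ih]; exact (flagF_succ M (fun k => (σ.1 k).1) t).symm
  have h1 : σ.1 = liftH M (fun k => (σ.1 k).1) := by
    funext i
    exact Prod.ext rfl (hflag i)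
  exact Prod.ext h1 rfl

lemma sum_lift (M : MDP X A) (g : Traj (binAug M) → ℝ)
    (h0 : ∀ σ, σ ≠ liftTraj M (projTraj M σ) → g σ = 0) :
    ∑ σ, g σ = ∑ τ, g (liftTraj M τ) := by
  have hinj : Function.Injective (liftTraj M) := by
    intro τ τ' h
    have h1 : τ.1 = τ'.1 := by
      funext i
      exact congrArg (fun p => (p.1 i).1) h
    exact Prod.ext h1 (congrArg (fun p => p.2) h)
  rw [← Finset.sum_image (g := liftTraj M) (fun τ _ τ' _ h => hinj h)]
  refine (Finset.sum_subset (Finset.subset_univ _) fun σ _ hσ => h0 σ fun hc => ?_).symm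
  exact hσ (Finset.mem_image.mpr ⟨projTraj M σ, Finset.mem_univ _, hc.symm⟩)

/-- Any policy of the binary augmented MDP can be imitated by a
policy of the original MDP achieving the same objective value and whose joint
alarm probability equals the probability of the final flag being raised. -/
theorem binAug_policy_transfer [Nonempty X] [Nonempty A]
    (M : MDP X A) (x0 : X) (hx0 : x0 ∉ M.Xa) (q : HistPolicy (binAug M)) :
    ∃ p : HistPolicy M,
      J M p x0 = J (binAug M) q (x0, false) ∧
      probEvent M p x0 (fun τ => ∃ t, τ.1 t ∈ M.Xa) =
        probEvent (binAug M) q (x0, false)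
          (fun σ => (σ.1 (Fin.last (binAug M).T)).2 = true) := by
  refine ⟨liftPolicy M q, ?_, ?_⟩
  · unfold J
    rw [sum_lift M _ (fun σ hσ => by
      rw [trajProb_binAug_eq_zero M x0 q σ hσ, zero_mul])]
    apply Finset.sum_congr rfl
    intro τ _
    rw [trajProb_lift]
    rfl
  · unfold probEvent
    rw [sum_lift M _ (fun σ hσ => by
      rw [trajProb_binAug_eq_zero M x0 q σ hσ]
      exact ite_self 0)]
    apply Finset.sum_congr rfl
    intro τ _
    dsimp only
    rw [trajProb_lift]
    by_cases h0 : trajProb M (liftPolicy M q) x0 τ = 0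
    · rw [h0, ite_self, ite_self]
    · have hstart : τ.1 0 = x0 := trajProb_ne_zero_start M _ x0 τ h0
      have hiff : (∃ t, τ.1 t ∈ M.Xa) ↔
          ((liftTraj M τ).1 (Fin.last (binAug M).T)).2 = true := by
        show _ ↔ flagF M τ.1 (Fin.last M.T) = true
        rw [flagF, decide_eq_true_eq]
        constructor
        · rintro ⟨t, ht⟩
          refine ⟨t, Fin.le_last t, ?_, ht⟩
          rintro rfl
          rw [hstart] at ht
          exact hx0 ht
        · rintro ⟨j, -, -, hm⟩
          exact ⟨j, hm⟩
      simp only [hiff]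
      by_cases hb : ((liftTraj M τ).1 (Fin.last (binAug M).T)).2 = true
      · rw [if_pos hb, if_pos hb]
      · rw [if_neg hb, if_neg hb]

end
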